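/- Let g ≥ 2 be an integer. Then for every positive integer n, λ_g(n) ≤ l_g(n), and consequently for every ε > 0 there exists N such that for all n ≥ N, λ_g(n) ≤ l_g(n) ≤ log_g n + (g^2 · λ_g(n))/λ_g(λ_g(n))^2 + (log_g n)/⌊λ_g(λ_g(n)) − 2λ_g(λ_g(λ_g(n)))⌋. -/

import Mathlib

/-- `IsGAddChain g a r d` says that `a 0 = 1, a 1, …, a r = d` is a `g`-addition chain
for `d`: each term `a i` (for `1 ≤ i ≤ r`) is a sum `a (j 1) + ⋯ + a (j k)` of `k`
earlier terms, where `2 ≤ k ≤ g` and `j 1 ≤ ⋯ ≤ j k ≤ i - 1`. -/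
def IsGAddChain (g : ℕ) (a : ℕ → ℕ) (r : ℕ) (d : ℕ) : Prop :=
  a 0 = 1 ∧ a r = d ∧
  ∀ i, 1 ≤ i → i ≤ r →
    ∃ k, 2 ≤ k ∧ k ≤ g ∧
      ∃ j : Fin k → ℕ, Monotone j ∧ (∀ t, j t ≤ i - 1) ∧
        a i = ∑ t, a (j t)

/-- `gAddChainLength g d` is `l_g(d)`, the length of a shortest `g`-addition chain for `d`. -/
noncomputable def gAddChainLength (g d : ℕ) : ℕ :=
  sInf {r | ∃ a : ℕ → ℕ, IsGAddChain g a r d}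

/-- `nonzeroDigits m d` is `μ_m(d)`, the number of nonzero digits of `d` in base `m`. -/
def nonzeroDigits (m d : ℕ) : ℕ :=
  ((Nat.digits m d).filter (· ≠ 0)).length

def ChainSteps (g : ℕ) (a : ℕ → ℕ) (r : ℕ) : Prop :=
  a 0 = 1 ∧ ∀ i, 1 ≤ i → i ≤ r →
    ∃ k, 2 ≤ k ∧ k ≤ g ∧
      ∃ j : Fin k → ℕ, Monotone j ∧ (∀ t, j t ≤ i - 1) ∧
        a i = ∑ t, a (j t)

lemma isGAddChain_iff {g : ℕ} {a : ℕ → ℕ} {r d : ℕ} :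
    IsGAddChain g a r d ↔ ChainSteps g a r ∧ a r = d := by
  unfold IsGAddChain ChainSteps; tauto

lemma monotone_pair (x y : ℕ) : Monotone (fun t : Fin 2 => x + (t : ℕ) * (y - x)) := by
  intro a b hab
  have : (a : ℕ) ≤ (b : ℕ) := hab
  exact Nat.add_le_add_left (Nat.mul_le_mul_right _ this) x

lemma sum_pair (f : ℕ → ℕ) (x y : ℕ) (h : x ≤ y) :
    ∑ t : Fin 2, f (x + (t : ℕ) * (y - x)) = f x + f y := by
  rw [Fin.sum_univ_two]
  congr 1
  · norm_num
  · congr 1; omega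

lemma ChainSteps.snoc {g : ℕ} {a : ℕ → ℕ} {r : ℕ} (h : ChainSteps g a r) {k : ℕ}
    (hk2 : 2 ≤ k) (hkg : k ≤ g) (j : Fin k → ℕ) (hj : Monotone j) (hjr : ∀ t, j t ≤ r) :
    ChainSteps g (fun i => if i ≤ r then a i else ∑ t, a (j t)) (r + 1) := by
  obtain ⟨h0, hstep⟩ := h
  constructor
  · simp [h0]
  · intro i hi1 hir
    rcases Nat.lt_or_ge i (r + 1) with hlt | hge
    · have hir' : i ≤ r := Nat.lt_succ_iff.mp hlt
      obtain ⟨k', hk'2, hk'g, j', hj', hj'le, hsum⟩ := hstep i hi1 hir'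
      refine ⟨k', hk'2, hk'g, j', hj', hj'le, ?_⟩
      have hle : ∀ t, j' t ≤ r := fun t => le_trans (hj'le t) (le_trans (Nat.sub_le i 1) hir')
      show (if i ≤ r then a i else _) = _
      rw [if_pos hir', hsum]
      exact Finset.sum_congr rfl fun t _ => (if_pos (hle t)).symm
    · have hi : i = r + 1 := le_antisymm hir hge
      subst hi
      refine ⟨k, hk2, hkg, j, hj, fun t => by simpa using hjr t, ?_⟩
      show (if r + 1 ≤ r then a (r + 1) else _) = _
      rw [if_neg (by omega)]
      exact Finset.sum_congr rfl fun t _ => (if_pos (hjr t)).symm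

lemma sum_const_fin (g c : ℕ) : ∑ _t : Fin g, c = g * c := by
  simp [Finset.sum_const, Finset.card_univ]

lemma mul_steps {g : ℕ} {a : ℕ → ℕ} {r s : ℕ} (hg : 2 ≤ g) (h : ChainSteps g a r)
    (hs : s ≤ r) :
    ∀ t, 1 ≤ t → ∃ a', ChainSteps g a' (r + t) ∧ (∀ i, i ≤ r → a' i = a i) ∧
      a' (r + t) = g ^ t * a s := by
  intro t
  induction t with
  | zero => omega
  | succ t ih =>
    intro _
    rcases Nat.eq_zero_or_pos t with rfl | ht
    · refine ⟨_, h.snoc hg le_rfl (fun _ : Fin g => s) monotone_const (fun _ => hs),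
        fun i hi => if_pos hi, ?_⟩
      show (if r + 1 ≤ r then _ else ∑ _t : Fin g, a s) = _
      rw [if_neg (by omega), sum_const_fin]
      ring
    · obtain ⟨a', hc', hagree, hend⟩ := ih ht
      refine ⟨_, hc'.snoc hg le_rfl (fun _ : Fin g => r + t) monotone_const
        (fun _ => le_rfl), ?_, ?_⟩
      · intro i hi
        show (if i ≤ r + t then a' i else _) = a i
        rw [if_pos (by omega)]
        exact hagree i hi
      · show (if r + t + 1 ≤ r + t then _ else ∑ _t : Fin g, a' (r + t)) = _
        rw [if_neg (by omega), sum_const_fin, hend]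
        ring

lemma main_chain (g k : ℕ) (hg : 2 ≤ g) (hk : 1 ≤ k) :
    ∀ n, 1 ≤ n → ∃ a r s, ChainSteps g a r ∧ (∀ i, i ≤ g ^ k - 2 → a i = i + 1) ∧
      g ^ k - 2 ≤ r ∧ s ≤ r ∧ a s = n ∧ (g ^ k ≤ n → s = r) ∧
      r ≤ (g ^ k - 2) + (k + 1) * Nat.log (g ^ k) n := by
  have hm2 : 2 ≤ g ^ k := le_trans hg (Nat.le_self_pow (by omega) g)
  intro n
  induction n using Nat.strong_induction_on with
  | _ n ih =>
  intro hn
  rcases lt_or_ge n (g ^ k) with hnm | hnm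
  · -- base case: identity chain of length g^k - 2
    refine ⟨fun i => i + 1, g ^ k - 2, n - 1, ⟨rfl, ?_⟩, fun i _ => rfl, le_rfl,
      by omega, by simp; omega, by omega, by omega⟩
    intro i hi1 hir
    refine ⟨2, le_rfl, hg, fun t : Fin 2 => 0 + (t : ℕ) * (i - 1 - 0),
      monotone_pair 0 (i - 1), fun t => ?_, ?_⟩
    · rcases t with ⟨tv, htv⟩
      interval_cases tv <;> simp
    · rw [sum_pair (fun i => i + 1) 0 (i - 1) (by omega)]
      simp
      omega
  · -- inductive step
    have hq1 : 1 ≤ n / g ^ k := (Nat.one_le_div_iff (by omega)).mpr hnm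
    have hqlt : n / g ^ k < n := Nat.div_lt_self (by omega) (by omega)
    obtain ⟨a, r, s, hcs, hsm, hrm, hsr, has, _, hrb⟩ := ih (n / g ^ k) hqlt hq1
    obtain ⟨a1, hc1, hagree1, hend1⟩ := mul_steps hg hcs hsr k hk
    rw [has] at hend1
    have hlog : Nat.log (g ^ k) (n / g ^ k) + 1 = Nat.log (g ^ k) n := by
      have h1 := Nat.log_div_base (g ^ k) n
      have h2 : 0 < Nat.log (g ^ k) n := Nat.log_pos (by omega) hnm
      omega
    have hlog2 : (k + 1) * Nat.log (g ^ k) (n / g ^ k) + (k + 1)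
        = (k + 1) * Nat.log (g ^ k) n := by
      rw [← hlog]; ring
    rcases Nat.eq_zero_or_pos (n % g ^ k) with hd | hd
    · -- n is a multiple of g^k
      have hend : a1 (r + k) = n := by
        rw [hend1]
        exact Nat.mul_div_cancel' (Nat.dvd_of_mod_eq_zero hd)
      refine ⟨a1, r + k, r + k, hc1, ?_, by omega, le_rfl, hend, fun _ => rfl, by omega⟩
      intro i hi
      rw [hagree1 i (by omega)]
      exact hsm i hi
    · -- add the digit n % g^k
      set d := n % g ^ k with hdd
      have hdm : d ≤ g ^ k - 1 := by have := Nat.mod_lt n (show 0 < g ^ k by omega); omega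
      have hd1 : a1 (d - 1) = d := by
        rw [hagree1 (d - 1) (by omega), hsm (d - 1) (by omega)]
        omega
      have hpair : d - 1 ≤ r + k := by omega
      refine ⟨_, r + k + 1, r + k + 1,
        hc1.snoc le_rfl hg (fun t : Fin 2 => (d - 1) + (t : ℕ) * ((r + k) - (d - 1)))
          (monotone_pair _ _) (fun t => ?_) , ?_, by omega, le_rfl, ?_, fun _ => rfl, by omega⟩
      · rcases t with ⟨tv, htv⟩
        interval_cases tv <;> simp <;> omega
      · intro i hi
        show (if i ≤ r + k then a1 i else _) = i + 1
        rw [if_pos (by omega), hagree1 i (by omega)]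
        exact hsm i hi
      · show (if r + k + 1 ≤ r + k then _ else _) = n
        rw [if_neg (by omega), sum_pair a1 (d - 1) (r + k) hpair, hd1, hend1]
        have := Nat.mod_add_div n (g ^ k)
        omega

lemma chain_le_pow {g : ℕ} {a : ℕ → ℕ} {r : ℕ} (hg : 2 ≤ g) (h : ChainSteps g a r) :
    ∀ i, i ≤ r → a i ≤ g ^ i := by
  intro i
  induction i using Nat.strong_induction_on with
  | _ i ih =>
  intro hir
  rcases Nat.eq_zero_or_pos i with rfl | hi
  · simp [h.1]
  · obtain ⟨k, hk2, hkg, j, _, hjle, hsum⟩ := h.2 i hi hir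
    rw [hsum]
    calc ∑ t, a (j t) ≤ ∑ _t : Fin k, g ^ (i - 1) :=
          Finset.sum_le_sum fun t _ =>
            le_trans (ih (j t) (by have := hjle t; omega) (by have := hjle t; omega))
              (Nat.pow_le_pow_right (by omega) (hjle t))
      _ = k * g ^ (i - 1) := sum_const_fin k _
      _ ≤ g * g ^ (i - 1) := Nat.mul_le_mul_right _ hkg
      _ = g ^ i := by
          rw [← pow_succ']
          congr 1
          omega

lemma id_chain (g n : ℕ) (hg : 2 ≤ g) (hn : 1 ≤ n) :
    IsGAddChain g (fun i => i + 1) (n - 1) n := by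
  refine ⟨rfl, by simp; omega, ?_⟩
  intro i hi1 hir
  refine ⟨2, le_rfl, hg, fun t : Fin 2 => 0 + (t : ℕ) * (i - 1 - 0),
    monotone_pair 0 (i - 1), fun t => ?_, ?_⟩
  · rcases t with ⟨tv, htv⟩
    interval_cases tv <;> simp
  · rw [sum_pair (fun i => i + 1) 0 (i - 1) (by omega)]
    simp
    omega

lemma lower_bound (g : ℕ) (hg : 2 ≤ g) (n : ℕ) (hn : 1 ≤ n) :
    Nat.log g n ≤ gAddChainLength g n := by
  have hne : {r | ∃ a : ℕ → ℕ, IsGAddChain g a r n}.Nonempty :=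
    ⟨n - 1, fun i => i + 1, id_chain g n hg hn⟩
  obtain ⟨a, hch⟩ := Nat.sInf_mem hne
  rw [isGAddChain_iff] at hch
  obtain ⟨hcs, hend⟩ := hch
  have : n ≤ g ^ (gAddChainLength g n) := by
    nth_rewrite 1 [← hend]
    exact chain_le_pow hg hcs _ le_rfl
  calc Nat.log g n ≤ Nat.log g (g ^ gAddChainLength g n) := Nat.log_mono_right this
    _ = gAddChainLength g n := Nat.log_pow (by omega) _

lemma two_pow_ge (L : ℕ) (hL : 3 ≤ L) : 2 * L + 1 ≤ 2 ^ L := by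
  induction L with
  | zero => omega
  | succ L ih =>
    rcases Nat.lt_or_ge L 3 with h | h
    · interval_cases L <;> simp_all
    · have := ih h
      have : 2 ^ L ≥ 4 := by calc (4:ℕ) = 2^2 := rfl
                                  _ ≤ 2 ^ L := Nat.pow_le_pow_right (by omega) (by omega)
      rw [pow_succ]
      omega

lemma log_small (g x : ℕ) (hg : 2 ≤ g) (hx : 8 ≤ x) : 2 * Nat.log g x + 1 ≤ x := by
  have hL : Nat.log g x ≤ Nat.log 2 x := Nat.log_anti_left (by omega) hg
  have h3 : 3 ≤ Nat.log 2 x := by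
    have : (2:ℕ) ^ 3 ≤ x := by norm_num; omega
    exact (Nat.le_log_iff_pow_le (by omega) (by omega)).mpr this
  have h2L : 2 ^ Nat.log 2 x ≤ x := Nat.pow_log_le_self 2 (by omega)
  have := two_pow_ge (Nat.log 2 x) h3
  omega

/-- for an integer `g ≥ 2`: every positive integer `n` satisfies
`λ_g(n) ≤ l_g(n)`, and for every `ε > 0` there is `N` such that for all `n ≥ N`,
`λ_g(n) ≤ l_g(n) ≤ log_g n + g² λ_g(n) / λ_g(λ_g(n))² +
  log_g n / ⌊λ_g(λ_g(n)) - 2 λ_g(λ_g(λ_g(n)))⌋`. -/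
theorem gAddChainLength_explicit_bounds (g : ℕ) (hg : 2 ≤ g) :
    (∀ n : ℕ, 1 ≤ n → Nat.log g n ≤ gAddChainLength g n) ∧
    ∀ ε : ℝ, 0 < ε → ∃ N : ℕ, ∀ n : ℕ, N ≤ n →
      Nat.log g n ≤ gAddChainLength g n ∧
      (gAddChainLength g n : ℝ) ≤
        Real.logb g n +
          (g : ℝ) ^ 2 * (Nat.log g n : ℝ) / (Nat.log g (Nat.log g n) : ℝ) ^ 2 +
          Real.logb g n /
            (((Nat.log g (Nat.log g n) : ℤ) -
              2 * (Nat.log g (Nat.log g (Nat.log g n)) : ℤ) : ℤ) : ℝ) := by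
  refine ⟨fun n hn => lower_bound g hg n hn, ?_⟩
  intro ε hε
  refine ⟨g ^ g ^ 8, fun n hn => ?_⟩
  have hg1 : 1 < g := hg
  have hNpos : 0 < g ^ g ^ 8 := Nat.pow_pos (by omega)
  have hn1 : 1 ≤ n := le_trans hNpos hn
  set L1 := Nat.log g n with hl1
  set L2 := Nat.log g L1 with hl2
  set L3 := Nat.log g L2 with hl3
  have hg8pos : 0 < g ^ 8 := Nat.pow_pos (by omega)
  have hL1b : g ^ 8 ≤ L1 := by
    calc g ^ 8 = Nat.log g (g ^ g ^ 8) := (Nat.log_pow hg1 _).symm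
      _ ≤ L1 := Nat.log_mono_right hn
  have hL2b : 8 ≤ L2 := by
    calc 8 = Nat.log g (g ^ 8) := (Nat.log_pow hg1 _).symm
      _ ≤ L2 := Nat.log_mono_right hL1b
  have hks : 2 * L3 + 1 ≤ L2 := log_small g L2 hg hL2b
  set k := L2 - 2 * L3 with hkdef
  have hk1 : 1 ≤ k := by omega
  have hL1pos : 1 ≤ L1 := by omega
  have hgL2 : g ^ L2 ≤ L1 := Nat.pow_log_le_self g (by omega)
  have hL1n : L1 ≤ n := Nat.log_le_self g n
  have hgkn : g ^ k ≤ n := by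
    calc g ^ k ≤ g ^ L2 := Nat.pow_le_pow_right (by omega) (by omega)
      _ ≤ L1 := hgL2
      _ ≤ n := hL1n
  obtain ⟨a, r, s, hcs, _, _, hsr, has, hsend, hrb⟩ := main_chain g k hg hk1 n (by omega)
  have hsr' : s = r := hsend hgkn
  have hch : IsGAddChain g a r n := isGAddChain_iff.mpr ⟨hcs, by rw [← hsr']; exact has⟩
  have hle : gAddChainLength g n ≤ r := Nat.sInf_le ⟨a, hch⟩
  set t := Nat.log (g ^ k) n with htdef
  have hkt : k * t ≤ L1 := by
    have h1 : (g ^ k) ^ t ≤ n := Nat.pow_log_le_self _ (by omega)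
    rw [← pow_mul] at h1
    exact (Nat.le_log_iff_pow_le hg1 (by omega)).mpr h1
  have hnat : gAddChainLength g n ≤ g ^ k + L1 + t := by
    have he : (k + 1) * t = k * t + t := by ring
    omega
  have hkey : g ^ k * L2 ^ 2 ≤ g ^ 2 * L1 := by
    have e1 : g ^ k * g ^ (2 * L3) = g ^ L2 := by rw [← pow_add]; congr 1; omega
    have e2 : L2 ^ 2 ≤ g ^ 2 * g ^ (2 * L3) := by
      have h := Nat.lt_pow_succ_log_self hg1 L2
      calc L2 ^ 2 ≤ (g ^ (L3 + 1)) ^ 2 := Nat.pow_le_pow_left (le_of_lt h) 2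
        _ = g ^ 2 * g ^ (2 * L3) := by rw [← pow_mul, ← pow_add]; congr 1; omega
    calc g ^ k * L2 ^ 2 ≤ g ^ k * (g ^ 2 * g ^ (2 * L3)) := Nat.mul_le_mul_left _ e2
      _ = g ^ 2 * (g ^ k * g ^ (2 * L3)) := by ring
      _ = g ^ 2 * g ^ L2 := by rw [e1]
      _ ≤ g ^ 2 * L1 := Nat.mul_le_mul_left _ hgL2
  refine ⟨lower_bound g hg n hn1, ?_⟩
  have hKk : ((L2 : ℤ) - 2 * (L3 : ℤ)) = (k : ℤ) := by omega
  rw [hKk]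
  have hlogb : (L1 : ℝ) ≤ Real.logb g n := Real.natLog_le_logb n g
  have hL2R : (0:ℝ) < (L2:ℝ) := by exact_mod_cast (by omega : 0 < L2)
  have hkR : (0:ℝ) < (k:ℝ) := by exact_mod_cast (by omega : 0 < k)
  have h1 : ((g ^ k : ℕ):ℝ) ≤ (g:ℝ)^2 * (L1:ℝ) / (L2:ℝ)^2 := by
    rw [le_div_iff₀ (by positivity)]
    calc ((g ^ k : ℕ):ℝ) * (L2:ℝ)^2 = ((g ^ k * L2 ^ 2 : ℕ):ℝ) := by push_cast; ring
      _ ≤ ((g ^ 2 * L1 : ℕ):ℝ) := by exact_mod_cast hkey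
      _ = (g:ℝ)^2 * (L1:ℝ) := by push_cast; ring
  have h3 : (t:ℝ) ≤ Real.logb g n / ((k:ℤ):ℝ) := by
    rw [show ((k:ℤ):ℝ) = (k:ℝ) by push_cast; ring, le_div_iff₀ hkR]
    calc (t:ℝ) * (k:ℝ) = ((k * t : ℕ):ℝ) := by push_cast; ring
      _ ≤ (L1:ℝ) := by exact_mod_cast hkt
      _ ≤ Real.logb g n := hlogb
  calc (gAddChainLength g n : ℝ) ≤ ((g ^ k + L1 + t : ℕ) : ℝ) := by exact_mod_cast hnat
    _ = ((g ^ k : ℕ):ℝ) + (L1:ℝ) + (t:ℝ) := by push_cast; ring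
    _ ≤ Real.logb g n + (g:ℝ)^2 * (L1:ℝ) / (L2:ℝ)^2 + Real.logb g n / ((k:ℤ):ℝ) := by
        linarith
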